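/- Let r, c, m, p > 0 and 0 < a < 1 with p ≥ 1/a. Then the extinction equilibrium (0,0) is globally asymptotically stable in the open first quadrant: for every pair of differentiable functions u, v : [0, ∞) → ℝ satisfying u'(t) = r·u(t)·(1−u(t))·(u(t)−a) − (1+c·v(t))·u(t)·v(t) and v'(t) = m·v(t)·(p·u(t)·(1+c·v(t)) − 1) with u(0) > 0 and v(0) > 0, one has u(t) → 0 and v(t) → 0 as t → ∞. -/

import Mathlib

open Set Filter Topology

/-- Derivative bound gives linear bound. -/
lemma my_slope_bound {f φ : ℝ → ℝ} {s T δ : ℝ} (hsT : s ≤ T)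
    (hf : ∀ t ∈ Icc s T, HasDerivAt f (φ t) t)
    (hb : ∀ t ∈ Icc s T, φ t ≤ δ) : f T ≤ f s + δ * (T - s) := by
  have hg : ∀ t ∈ Icc s T, HasDerivAt (fun t => f t - δ * t) (φ t - δ) t := by
    intro t ht
    have := (hf t ht).sub ((hasDerivAt_id t).const_mul δ)
    simp only [id, mul_one] at this
    exact this
  have hanti : AntitoneOn (fun t => f t - δ * t) (Icc s T) := by
    apply antitoneOn_of_deriv_nonpos (convex_Icc s T)
    · exact fun t ht => (hg t ht).continuousAt.continuousWithinAt
    · intro t ht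
      rw [interior_Icc] at ht
      exact (hg t (Ioo_subset_Icc_self ht)).differentiableAt.differentiableWithinAt
    · intro t ht
      rw [interior_Icc] at ht
      rw [(hg t (Ioo_subset_Icc_self ht)).deriv]
      have := hb t (Ioo_subset_Icc_self ht)
      linarith
  have := hanti (left_mem_Icc.2 hsT) (right_mem_Icc.2 hsT) hsT
  simp only at this
  linarith

/-- Barrier lemma. -/
lemma my_barrier {f φ : ℝ → ℝ} {s b : ℝ}
    (hf : ∀ t, s ≤ t → HasDerivAt f (φ t) t)
    (hs : f s < b) (hbar : ∀ t, s ≤ t → f t = b → φ t < 0) :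
    ∀ t, s ≤ t → f t < b := by
  by_contra h
  push_neg at h
  obtain ⟨t, hst, hbt⟩ := h
  have hcont : ContinuousOn f (Icc s t) := fun x hx =>
    (hf x hx.1).continuousAt.continuousWithinAt
  set S : Set ℝ := Icc s t ∩ f ⁻¹' (Ici b) with hS
  have hSclosed : IsClosed S := hcont.preimage_isClosed_of_isClosed isClosed_Icc isClosed_Ici
  have hSne : S.Nonempty := ⟨t, ⟨hst, le_refl t⟩, hbt⟩
  have hSbdd : BddBelow S := ⟨s, fun x hx => hx.1.1⟩
  set T := sInf S with hT
  have hTS : T ∈ S := hSclosed.csInf_mem hSne hSbdd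
  have hsT : s ≤ T := hTS.1.1
  have hfTb : b ≤ f T := hTS.2
  have hsltT : s < T := by
    rcases eq_or_lt_of_le hsT with h' | h'
    · exfalso; rw [← h'] at hfTb; linarith
    · exact h'
  have hbelow : ∀ x ∈ Ico s T, f x < b := by
    intro x hx
    by_contra hxb
    push_neg at hxb
    have hxS : x ∈ S := ⟨⟨hx.1, le_trans hx.2.le hTS.1.2⟩, hxb⟩
    exact absurd (csInf_le hSbdd hxS) (not_le.2 hx.2)
  haveI : (𝓝[Ico s T] T).NeBot := right_nhdsWithin_Ico_neBot hsltT
  have hfT : f T = b := by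
    refine le_antisymm ?_ hfTb
    have hcw : ContinuousWithinAt f (Ico s T) T :=
      (hf T hsT).continuousAt.continuousWithinAt
    refine le_of_tendsto hcw ?_
    filter_upwards [eventually_mem_nhdsWithin] with x hx
    exact (hbelow x hx).le
  have hslope : Tendsto (slope f T) (𝓝[Ico s T] T) (𝓝 (φ T)) := by
    have := hasDerivAt_iff_tendsto_slope.1 (hf T hsT)
    exact this.mono_left (nhdsWithin_mono T (fun x hx => ne_of_lt hx.2))
  have hφT : 0 ≤ φ T := by
    refine ge_of_tendsto hslope ?_
    filter_upwards [eventually_mem_nhdsWithin] with x hx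
    have hfx : f x < b := hbelow x hx
    rw [slope_def_field]
    exact (div_pos_of_neg_of_neg (by linarith) (by linarith [hx.2])).le
  exact absurd (hbar T hsT hfT) (not_lt.2 hφT)

/-- Positivity for scalar ODEs `f' = f * g`. -/
lemma my_pos {f g : ℝ → ℝ} (hgc : ContinuousOn g (Ici 0))
    (hf : ∀ t, 0 ≤ t → HasDerivAt f (f t * g t) t) (h0 : 0 < f 0) :
    ∀ t, 0 ≤ t → 0 < f t := by
  intro T hT
  set g' : ℝ → ℝ := fun t => g (max t 0) with hg'
  have hg'c : Continuous g' :=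
    hgc.comp_continuous (continuous_id.max continuous_const) (fun x => mem_Ici.2 (le_max_right _ _))
  set G : ℝ → ℝ := fun t => ∫ x in (0:ℝ)..t, g' x with hG
  have hGd : ∀ t, HasDerivAt G (g' t) t := fun t =>
    (hg'c.integral_hasStrictDerivAt 0 t).hasDerivAt
  set w : ℝ → ℝ := fun t => f t * Real.exp (-G t) with hw
  have hwd : ∀ t, 0 ≤ t → HasDerivAt w 0 t := by
    intro t ht
    have h1 : HasDerivAt (fun s => Real.exp (-G s)) (-(g' t) * Real.exp (-G t)) t := by
      have := ((hGd t).neg).exp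
      simpa [mul_comm] using this
    have h2 := (hf t ht).mul h1
    have hgt : g' t = g t := by simp [hg', max_eq_left ht]
    rw [show (0:ℝ) = f t * g t * Real.exp (-G t) + f t * (-g' t * Real.exp (-G t)) by
      rw [hgt]; ring]
    exact h2
  have hcont : ContinuousOn w (Icc 0 T) := fun x hx =>
    (hwd x hx.1 |>.continuousAt).continuousWithinAt
  have hconst := constant_of_has_deriv_right_zero hcont
    (fun x hx => (hwd x hx.1).hasDerivWithinAt) T (right_mem_Icc.2 hT)
  have hG0 : G 0 = 0 := by simp [hG]
  have hwT : f T * Real.exp (-G T) = f 0 := by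
    simpa [hw, hG0] using hconst
  nlinarith [Real.exp_pos (-G T)]

set_option maxHeartbeats 2000000 in
/-- If `p ≥ 1/a`, the extinction equilibrium `(0,0)` is globally asymptotically
stable in the open first quadrant: every positive solution tends to `(0,0)`. -/
theorem stmt_18 (r c m p a : ℝ) (hr : 0 < r) (hc : 0 < c) (hm : 0 < m) (hp : 0 < p)
    (ha0 : 0 < a) (ha1 : a < 1) (hpa : 1 / a ≤ p)
    (u v : ℝ → ℝ)
    (hu : ∀ t : ℝ, 0 ≤ t →
      HasDerivAt u (r * u t * (1 - u t) * (u t - a) - (1 + c * v t) * u t * v t) t)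
    (hv : ∀ t : ℝ, 0 ≤ t →
      HasDerivAt v (m * v t * (p * u t * (1 + c * v t) - 1)) t)
    (hu0 : 0 < u 0) (hv0 : 0 < v 0) :
    Filter.Tendsto u Filter.atTop (nhds 0) ∧ Filter.Tendsto v Filter.atTop (nhds 0) := by
  have hpa' : 1 ≤ p * a := by
    rw [div_le_iff₀ ha0] at hpa; linarith
  -- continuity
  have hcu : ContinuousOn u (Ici 0) := fun x hx => (hu x hx).continuousAt.continuousWithinAt
  have hcv : ContinuousOn v (Ici 0) := fun x hx => (hv x hx).continuousAt.continuousWithinAt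
  -- positivity of u
  have hupos : ∀ t, 0 ≤ t → 0 < u t := by
    refine my_pos (g := fun t => r * (1 - u t) * (u t - a) - (1 + c * v t) * v t) ?_ ?_ hu0
    · exact ((continuousOn_const.mul (continuousOn_const.sub hcu)).mul
        (hcu.sub continuousOn_const)).sub
        ((continuousOn_const.add (continuousOn_const.mul hcv)).mul hcv)
    · intro t ht
      have := hu t ht
      have heq : r * u t * (1 - u t) * (u t - a) - (1 + c * v t) * u t * v t
          = u t * (r * (1 - u t) * (u t - a) - (1 + c * v t) * v t) := by ring
      rwa [heq] at this
  -- positivity of v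
  have hvpos : ∀ t, 0 ≤ t → 0 < v t := by
    refine my_pos (g := fun t => m * (p * u t * (1 + c * v t) - 1)) ?_ ?_ hv0
    · exact continuousOn_const.mul
        ((((continuousOn_const.mul hcu).mul
          (continuousOn_const.add (continuousOn_const.mul hcv))).sub continuousOn_const))
    · intro t ht
      have := hv t ht
      have heq : m * v t * (p * u t * (1 + c * v t) - 1)
          = v t * (m * (p * u t * (1 + c * v t) - 1)) := by ring
      rwa [heq] at this
  -- Step A: there is a time where u < a
  obtain ⟨t1, ht1, hut1⟩ : ∃ t1, 0 ≤ t1 ∧ u t1 < a := by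
    by_contra hA
    push_neg at hA
    set T : ℝ := (v 0)⁻¹ / (m * c) + 1 with hTdef
    have hT0 : (0:ℝ) ≤ T := by positivity
    have key := my_slope_bound (f := fun t => (v t)⁻¹)
        (φ := fun t => -(m * v t * (p * u t * (1 + c * v t) - 1)) / (v t) ^ 2)
        (δ := -(m * c)) hT0 ?_ ?_
    · have hvT := hvpos T hT0
      have : (0:ℝ) < (v T)⁻¹ := by positivity
      have hmc : 0 < m * c := mul_pos hm hc
      have hexp : (v 0)⁻¹ + -(m * c) * (T - 0) = -(m * c) := by
        rw [hTdef]; field_simp [hm.ne', hc.ne']; ring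
      rw [hexp] at key
      linarith
    · intro t ht
      exact (hv t ht.1).inv (ne_of_gt (hvpos t ht.1))
    · intro t ht
      have hvt := hvpos t ht.1
      have hut := hA t ht.1
      have hpu : 1 ≤ p * u t := by
        have : p * a ≤ p * u t := by nlinarith
        linarith
      rw [div_le_iff₀ (by positivity)]
      have h1 : 0 ≤ m * v t * (p * u t - 1) :=
        mul_nonneg (mul_nonneg hm.le hvt.le) (by linarith)
      have h2 : 0 ≤ (p * u t - 1) * (m * c * v t * v t) :=
        mul_nonneg (by linarith) (by positivity)
      nlinarith [h1, h2, sq_nonneg (v t)]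
  -- Step B: invariance of sublevels of u
  have hinv : ∀ b, 0 < b → b ≤ a → ∀ s, 0 ≤ s → u s < b → ∀ t, s ≤ t → u t < b := by
    intro b hb0 hba s hs hus
    refine my_barrier (φ := fun t =>
        r * u t * (1 - u t) * (u t - a) - (1 + c * v t) * u t * v t)
      (fun t ht => hu t (le_trans hs ht)) hus ?_
    intro t ht hub
    have hvt := hvpos t (hs.trans ht)
    show r * u t * (1 - u t) * (u t - a) - (1 + c * v t) * u t * v t < 0
    rw [hub]
    have h1 : 0 ≤ r * b * (1 - b) * (a - b) := by
      apply mul_nonneg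
      apply mul_nonneg
      · exact mul_nonneg hr.le hb0.le
      · linarith
      · linarith
    nlinarith [mul_pos hb0 hvt, mul_pos (mul_pos hc hvt) (mul_pos hb0 hvt)]
  have huA : ∀ t, t1 ≤ t → u t < a := hinv a ha0 le_rfl t1 ht1 hut1
  set b : ℝ := (u t1 + a) / 2 with hbdef
  have hub1 : 0 < u t1 := hupos t1 ht1
  have hb0 : 0 < b := by positivity
  have hba : b < a := by simp only [hbdef]; linarith
  have huB : ∀ t, t1 ≤ t → u t < b := hinv b hb0 hba.le t1 ht1 (by simp only [hbdef]; linarith)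
  -- Step C: u gets (and stays) below any positive level
  have hKey : ∀ ε, 0 < ε → ∃ N, t1 ≤ N ∧ ∀ t, N ≤ t → u t < ε := by
    intro ε hε
    set ε₁ : ℝ := min ε b with hε₁def
    have hε₁0 : 0 < ε₁ := lt_min hε hb0
    have hε₁b : ε₁ ≤ b := min_le_right _ _
    have hε₁a : ε₁ ≤ a := hε₁b.trans hba.le
    obtain ⟨N, hN1, hN2⟩ : ∃ N, t1 ≤ N ∧ u N < ε₁ := by
      by_contra hC
      push_neg at hC
      set δ : ℝ := r * ε₁ * (1 - b) * (a - b) with hδdef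
      have hδ0 : 0 < δ := by
        apply mul_pos
        apply mul_pos (mul_pos hr hε₁0)
        · linarith
        · linarith
      set T : ℝ := t1 + u t1 / δ with hTd
      have ht1T : t1 ≤ T := by
        have : 0 < u t1 / δ := by positivity
        simp only [hTd]; linarith
      have key := my_slope_bound (f := u)
        (φ := fun t => r * u t * (1 - u t) * (u t - a) - (1 + c * v t) * u t * v t)
        (δ := -δ) ht1T (fun t ht => hu t (ht1.trans ht.1)) ?_
      · have hupT := hupos T (ht1.trans ht1T)
        have hexp : u t1 + -δ * (T - t1) = 0 := by
          simp only [hTd]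
          field_simp
          ring
        rw [hexp] at key
        linarith
      · intro t ht
        have h0t : (0:ℝ) ≤ t := ht1.trans ht.1
        have hut := hupos t h0t
        have hvt := hvpos t h0t
        have hub := huB t ht.1
        have hul := hC t ht.1
        have h1 : 0 ≤ (u t - ε₁) * (1 - u t) * (a - u t) := by
          apply mul_nonneg; apply mul_nonneg
          · linarith
          · linarith
          · linarith
        have h2 : 0 ≤ ε₁ * (b - u t) * (a - u t) := by
          apply mul_nonneg; apply mul_nonneg
          · linarith
          · linarith
          · linarith
        have h3 : 0 ≤ ε₁ * (1 - b) * (b - u t) := by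
          apply mul_nonneg; apply mul_nonneg
          · linarith
          · linarith
          · linarith
        have h4 : 0 ≤ (1 + c * v t) * u t * v t := by positivity
        simp only [hδdef]
        nlinarith [mul_nonneg hr.le h1, mul_nonneg hr.le h2, mul_nonneg hr.le h3]
    exact ⟨N, hN1, fun t hNt =>
      lt_of_lt_of_le (hinv ε₁ hε₁0 hε₁a N (ht1.trans hN1) hN2 t hNt) (min_le_left _ _)⟩
  -- u tends to 0
  have htu : Filter.Tendsto u Filter.atTop (nhds 0) := by
    rw [Metric.tendsto_atTop]
    intro ε hε
    obtain ⟨N, hN1, hN2⟩ := hKey ε hε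
    refine ⟨N, fun t ht => ?_⟩
    have h0t : (0:ℝ) ≤ t := (ht1.trans hN1).trans ht
    have := hupos t h0t
    rw [Real.dist_eq, sub_zero, abs_of_pos this]
    exact hN2 t ht
  refine ⟨htu, ?_⟩
  -- v part
  set ε₀ : ℝ := min a (1 / (2 * p * (1 + c))) with hε₀def
  have hc1 : (0:ℝ) < 1 + c := by linarith
  have hε₀0 : 0 < ε₀ := lt_min ha0 (by positivity)
  have hε₀a : ε₀ ≤ a := min_le_left _ _
  have hε₂ : ε₀ * (2 * p * (1 + c)) ≤ 1 := by
    rw [← le_div_iff₀ (by positivity)]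
    exact min_le_right _ _
  obtain ⟨N₂, hN₂1, hN₂⟩ := hKey ε₀ hε₀0
  have hN₂0 : (0:ℝ) ≤ N₂ := ht1.trans hN₂1
  have hlogd : ∀ t, 0 ≤ t → HasDerivAt (fun s => Real.log (v s))
      (m * v t * (p * u t * (1 + c * v t) - 1) / v t) t := fun t ht =>
    (hv t ht).log (ne_of_gt (hvpos t ht))
  have hlogsimp : ∀ t, 0 ≤ t →
      m * v t * (p * u t * (1 + c * v t) - 1) / v t
        = m * (p * u t * (1 + c * v t) - 1) := by
    intro t ht
    have hvne := ne_of_gt (hvpos t ht)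
    field_simp
  -- D1: v eventually drops below 1
  obtain ⟨t3, ht3N, hvt3⟩ : ∃ t3, N₂ ≤ t3 ∧ v t3 < 1 := by
    by_contra hD
    push_neg at hD
    set Z : ℝ → ℝ := fun t => Real.log (v t) + m * p * u t with hZ
    have hZd : ∀ t, N₂ ≤ t → HasDerivAt Z
        (m * v t * (p * u t * (1 + c * v t) - 1) / v t
          + m * p * (r * u t * (1 - u t) * (u t - a) - (1 + c * v t) * u t * v t)) t := by
      intro t ht
      exact (hlogd t (hN₂0.trans ht)).add ((hu t (hN₂0.trans ht)).const_mul (m * p))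
    set T : ℝ := N₂ + (Z N₂ + 1) / m with hTd
    have hZN₂ : 0 ≤ Z N₂ := by
      have h1 : (0:ℝ) ≤ Real.log (v N₂) := Real.log_nonneg (hD N₂ le_rfl)
      have h2 : 0 < u N₂ := hupos N₂ hN₂0
      have := mul_pos (mul_pos hm hp) h2
      simp only [hZ]; linarith
    have hNT : N₂ ≤ T := by
      have : 0 < (Z N₂ + 1) / m := by positivity
      simp only [hTd]; linarith
    have key := my_slope_bound (f := Z) (δ := -m) hNT (fun t ht => hZd t ht.1) ?_
    · have hZT : 0 ≤ Z T := by
        have h1 : (0:ℝ) ≤ Real.log (v T) := Real.log_nonneg (hD T hNT)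
        have h2 : 0 < u T := hupos T (hN₂0.trans hNT)
        have := mul_pos (mul_pos hm hp) h2
        simp only [hZ]; linarith
      have hexp : Z N₂ + -m * (T - N₂) = -1 := by
        simp only [hTd]
        field_simp
        ring
      rw [hexp] at key
      linarith
    · intro t ht
      have h0t : 0 ≤ t := hN₂0.trans ht.1
      have hut := hupos t h0t
      have hvt := hvpos t h0t
      have huε := hN₂ t ht.1
      have hua : u t < a := lt_of_lt_of_le huε hε₀a
      have hv1 := hD t ht.1
      rw [hlogsimp t h0t]
      have hA1 : 0 ≤ m * p * u t * (1 + c * v t) * (v t - 1) :=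
        mul_nonneg (mul_nonneg (mul_nonneg (mul_nonneg hm.le hp.le) hut.le)
          (by nlinarith [mul_pos hc hvt])) (by linarith)
      have hB1 : 0 ≤ m * p * (r * u t * (1 - u t) * (a - u t)) :=
        mul_nonneg (mul_nonneg hm.le hp.le)
          (mul_nonneg (mul_nonneg (mul_nonneg hr.le hut.le) (by linarith)) (by linarith))
      nlinarith [hA1, hB1]
  have ht30 : (0:ℝ) ≤ t3 := hN₂0.trans ht3N
  -- D2: v stays below 1
  have hvlt1 : ∀ t, t3 ≤ t → v t < 1 := by
    refine my_barrier (φ := fun t => m * v t * (p * u t * (1 + c * v t) - 1))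
      (fun t ht => hv t (ht30.trans ht)) hvt3 ?_
    intro t ht hv1
    have h0t : 0 ≤ t := ht30.trans ht
    have hut := hupos t h0t
    have huε := hN₂ t (ht3N.trans ht)
    show m * v t * (p * u t * (1 + c * v t) - 1) < 0
    rw [hv1]
    have e1 : p * u t < p * ε₀ := by nlinarith
    have e5 : p * ε₀ * (1 + c) ≤ 1 / 2 := by nlinarith
    have e6 : p * u t * (1 + c) < 1 / 2 := by nlinarith
    nlinarith
  -- D3: exponential decay of v
  have hdecay : ∀ T, t3 ≤ T →
      Real.log (v T) ≤ Real.log (v t3) + -(m / 2) * (T - t3) := by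
    intro T hT
    refine my_slope_bound hT (fun t ht => hlogd t (ht30.trans ht.1)) ?_
    intro t ht
    have h0t : 0 ≤ t := ht30.trans ht.1
    have hut := hupos t h0t
    have hvt := hvpos t h0t
    have huε := hN₂ t (ht3N.trans ht.1)
    have hv1 := hvlt1 t ht.1
    rw [hlogsimp t h0t]
    have e1 : p * u t ≤ p * ε₀ := by nlinarith
    have e2 : 1 + c * v t ≤ 1 + c := by nlinarith [mul_lt_mul_of_pos_left hv1 hc]
    have e3 : (0:ℝ) < 1 + c * v t := by nlinarith [mul_pos hc hvt]
    have e4 : p * u t * (1 + c * v t) ≤ p * ε₀ * (1 + c) :=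
      mul_le_mul e1 e2 e3.le (mul_pos hp hε₀0).le
    have e5 : p * ε₀ * (1 + c) ≤ 1 / 2 := by nlinarith
    nlinarith
  -- conclude
  have hg : Filter.Tendsto
      (fun t : ℝ => Real.exp (Real.log (v t3) + -(m / 2) * (t - t3)))
      Filter.atTop (nhds 0) := by
    apply Real.tendsto_exp_atBot.comp
    have h1 : Filter.Tendsto (fun t : ℝ => m / 2 * (t - t3)) Filter.atTop Filter.atTop :=
      (tendsto_atTop_add_const_right _ (-t3) tendsto_id).const_mul_atTop (by positivity)
    have h2 : Filter.Tendsto (fun t : ℝ => -(m / 2 * (t - t3))) Filter.atTop Filter.atBot :=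
      tendsto_neg_atTop_atBot.comp h1
    have h3 := tendsto_atBot_add_const_left (l := Filter.atTop) (Real.log (v t3)) h2
    simpa [neg_mul, sub_eq_add_neg] using h3
  apply squeeze_zero' ?_ ?_ hg
  · filter_upwards [eventually_ge_atTop t3] with t ht
    exact (hvpos t (ht30.trans ht)).le
  · filter_upwards [eventually_ge_atTop t3] with t ht
    have hd := hdecay t ht
    calc v t = Real.exp (Real.log (v t)) := (Real.exp_log (hvpos t (ht30.trans ht))).symm
      _ ≤ _ := Real.exp_le_exp.2 hd
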